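/- If b > 3, then the set of all values of ((b−1)/(b+1))·(x₀ + ∑_{n=1}^∞ c_n/b^n), where x₀ ∈ {0,1} and each c_n ∈ {0,1,2}, is a set of Lebesgue measure zero in [0,1]. -/

import Mathlib

open MeasureTheory
open scoped ENNReal

private lemma aux_summable (b : ℝ) (hb : 1 < b) (c : ℕ → ℕ) (hc : ∀ n, c n ≤ 2) :
    Summable (fun n => (c n : ℝ) / b ^ (n + 1)) := by
  have h0 : (0:ℝ) < b := by linarith
  have hgeo : Summable (fun n : ℕ => (2 / b) * (1 / b) ^ n) :=
    (summable_geometric_of_lt_one (by positivity) (by rw [div_lt_one h0]; linarith)).mul_left _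
  refine Summable.of_nonneg_of_le (fun n => by positivity) (fun n => ?_) hgeo
  have h1 : (c n : ℝ) ≤ 2 := by exact_mod_cast hc n
  have h2 : (2 / b) * (1 / b) ^ n = 2 / b ^ (n + 1) := by
    rw [div_pow, one_pow, pow_succ]
    field_simp
  rw [h2]
  apply div_le_div_of_nonneg_right h1 (by positivity) |>.trans_eq rfl

private lemma aux_tail (b : ℝ) (hb : 1 < b) (c : ℕ → ℕ) (hc : ∀ n, c n ≤ 2) (N : ℕ) :
    ∑' n : ℕ, (c (n + N) : ℝ) / b ^ (n + N + 1) ≤ 2 / ((b - 1) * b ^ N) := by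
  have h0 : (0:ℝ) < b := by linarith
  have hlt : (1 : ℝ) / b < 1 := by rw [div_lt_one h0]; linarith
  have hgeo : Summable (fun n : ℕ => (2 / b ^ (N + 1)) * (1 / b) ^ n) :=
    (summable_geometric_of_lt_one (by positivity) hlt).mul_left _
  have hsum : Summable (fun n : ℕ => (c (n + N) : ℝ) / b ^ (n + N + 1)) := by
    have := (aux_summable b hb c hc).comp_injective (add_left_injective N)
    exact this
  have hle : ∀ n : ℕ, (c (n + N) : ℝ) / b ^ (n + N + 1) ≤ (2 / b ^ (N + 1)) * (1 / b) ^ n := by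
    intro n
    have h1 : (c (n + N) : ℝ) ≤ 2 := by exact_mod_cast hc (n + N)
    have h2 : (2 / b ^ (N + 1)) * (1 / b) ^ n = 2 / b ^ (n + N + 1) := by
      rw [div_pow, one_pow]
      rw [show n + N + 1 = (N + 1) + n by ring, pow_add]
      field_simp
      ring
    rw [h2]
    exact div_le_div_of_nonneg_right h1 (by positivity) |>.trans_eq rfl
  calc ∑' n : ℕ, (c (n + N) : ℝ) / b ^ (n + N + 1)
      ≤ ∑' n : ℕ, (2 / b ^ (N + 1)) * (1 / b) ^ n := Summable.tsum_le_tsum hle hsum hgeo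
    _ = (2 / b ^ (N + 1)) * (1 - 1 / b)⁻¹ := by
        rw [tsum_mul_left, tsum_geometric_of_lt_one (by positivity) hlt]
    _ = 2 / ((b - 1) * b ^ N) := by
        have hb1 : b - 1 ≠ 0 := by linarith
        have hbN : b ^ N ≠ 0 := by positivity
        rw [pow_succ]
        field_simp

/-- If `b > 3`, the set of all values `((b−1)/(b+1))·(x₀ + ∑_{n=1}^∞ cₙ/bⁿ)` with
`x₀ ∈ {0,1}` and `cₙ ∈ {0,1,2}` has Lebesgue measure zero. -/
theorem stmt_10 (b : ℝ) (hb : 3 < b) :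
    volume {y : ℝ | ∃ x₀ : ℕ, x₀ ≤ 1 ∧ ∃ c : ℕ → ℕ, (∀ n, c n ≤ 2) ∧
      y = (b - 1) / (b + 1) * ((x₀ : ℝ) + ∑' n : ℕ, (c n : ℝ) / b ^ (n + 1))} = 0 := by
  have hb1 : (1:ℝ) < b := by linarith
  have hb0 : (0:ℝ) < b := by linarith
  have hbp1 : (0:ℝ) < b + 1 := by linarith
  have hbm1 : (0:ℝ) < b - 1 := by linarith
  set S := {y : ℝ | ∃ x₀ : ℕ, x₀ ≤ 1 ∧ ∃ c : ℕ → ℕ, (∀ n, c n ≤ 2) ∧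
      y = (b - 1) / (b + 1) * ((x₀ : ℝ) + ∑' n : ℕ, (c n : ℝ) / b ^ (n + 1))} with hS
  set k := (b - 1) / (b + 1) with hk
  have hk0 : 0 ≤ k := by positivity
  -- per-N covering bound
  have key : ∀ N : ℕ, volume S ≤
      ENNReal.ofReal ((2 * 3 ^ N : ℕ) * (2 / ((b + 1) * b ^ N))) := by
    intro N
    set L : ℝ := 2 / ((b + 1) * b ^ N) with hL
    have hL0 : 0 ≤ L := by positivity
    set a : Fin 2 × (Fin N → Fin 3) → ℝ := fun p =>
      k * ((p.1 : ℝ) + ∑ i : Fin N, (p.2 i : ℝ) / b ^ ((i : ℕ) + 1)) with ha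
    have hcover : S ⊆ ⋃ p : Fin 2 × (Fin N → Fin 3), Set.Icc (a p) (a p + L) := by
      intro y hy
      obtain ⟨x₀, hx₀, c, hc, hy⟩ := hy
      have hsum := aux_summable b hb1 c hc
      set p : Fin 2 × (Fin N → Fin 3) :=
        (⟨x₀, by omega⟩, fun i => ⟨c i, by have := hc i; omega⟩) with hp
      refine Set.mem_iUnion.2 ⟨p, ?_⟩
      have hPa : a p = k * ((x₀ : ℝ) + ∑ n ∈ Finset.range N, (c n : ℝ) / b ^ (n + 1)) := by
        simp only [ha, hp]
        rw [Fin.sum_univ_eq_sum_range (fun n => (c n : ℝ) / b ^ (n + 1))]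
      have hsplit := Summable.sum_add_tsum_nat_add N hsum
      set T := ∑' n : ℕ, (c n : ℝ) / b ^ (n + 1) with hT
      set P := ∑ n ∈ Finset.range N, (c n : ℝ) / b ^ (n + 1) with hP
      set tail := ∑' n : ℕ, (c (n + N) : ℝ) / b ^ (n + N + 1) with htail
      have hsplit' : P + tail = T := hsplit
      have htail0 : 0 ≤ tail := tsum_nonneg (fun n => by positivity)
      have htailU : tail ≤ 2 / ((b - 1) * b ^ N) := aux_tail b hb1 c hc N
      have hya : y = a p + k * tail := by
        rw [hy, hPa, ← hsplit']; ring
      constructor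
      · rw [hya]; nlinarith [mul_nonneg hk0 htail0]
      · rw [hya]
        have hkL : k * (2 / ((b - 1) * b ^ N)) = L := by
          rw [hk, hL]
          field_simp
        have : k * tail ≤ k * (2 / ((b - 1) * b ^ N)) := by
          exact mul_le_mul_of_nonneg_left htailU hk0
        linarith [hkL ▸ this]
    calc volume S ≤ volume (⋃ p : Fin 2 × (Fin N → Fin 3), Set.Icc (a p) (a p + L)) :=
          measure_mono hcover
      _ ≤ ∑' p : Fin 2 × (Fin N → Fin 3), volume (Set.Icc (a p) (a p + L)) :=
          measure_iUnion_le _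
      _ = ∑' p : Fin 2 × (Fin N → Fin 3), ENNReal.ofReal L := by
          congr 1; funext p; rw [Real.volume_Icc, add_sub_cancel_left]
      _ = ((2 * 3 ^ N : ℕ) : ℝ≥0∞) * ENNReal.ofReal L := by
          rw [tsum_fintype]
          simp [Finset.sum_const, Fintype.card_prod, Fintype.card_fun, nsmul_eq_mul]
      _ = ENNReal.ofReal ((2 * 3 ^ N : ℕ) * L) := by
          rw [ENNReal.ofReal_mul (by positivity)]
          congr 1
          rw [ENNReal.ofReal_natCast]
  -- the bound tends to 0
  have heq : ∀ N : ℕ, ((2 * 3 ^ N : ℕ) : ℝ) * (2 / ((b + 1) * b ^ N))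
      = (4 / (b + 1)) * (3 / b) ^ N := by
    intro N
    have hbN : (b : ℝ) ^ N ≠ 0 := by positivity
    push_cast
    rw [div_pow]
    field_simp
    ring
  have htends : Filter.Tendsto
      (fun N : ℕ => ENNReal.ofReal ((2 * 3 ^ N : ℕ) * (2 / ((b + 1) * b ^ N))))
      Filter.atTop (nhds 0) := by
    have h1 : Filter.Tendsto (fun N : ℕ => (3 / b) ^ N) Filter.atTop (nhds 0) :=
      tendsto_pow_atTop_nhds_zero_of_lt_one (by positivity) (by rw [div_lt_one hb0]; linarith)
    have h2 : Filter.Tendsto (fun N : ℕ => (4 / (b + 1)) * (3 / b) ^ N)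
        Filter.atTop (nhds 0) := by
      simpa using h1.const_mul (4 / (b + 1))
    have h3 := (ENNReal.tendsto_ofReal h2)
    simp only [ENNReal.ofReal_zero] at h3
    refine h3.congr (fun N => ?_)
    rw [heq N]
  have : volume S ≤ 0 := ge_of_tendsto' htends key
  exact le_antisymm this (zero_le)
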